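/- The Shapley-based contribution function ctrb^s satisfies the contribution existence principle with respect to each of the QE, DFQuAD, SD-DFQuAD, EB, and EBT semantics: for every acyclic QBAG G and a ∈ A, if σ_G(a) ≠ τ(a) then there exists x ∈ A∖{a} with ctrb^s_{G,a}(x) ≠ 0. -/

import Mathlib

open Finset

/-- A quantitative bipolar argumentation graph (QBAG): a finite set of arguments,
an initial strength function, and attack and support relations. -/
structure QBAG where
  args : Finset ℕ
  tau : ℕ → ℝ
  att : Finset (ℕ × ℕ)
  supp : Finset (ℕ × ℕ)

namespace QBAG

/-- The edge relation of the underlying directed graph (attack or support). -/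
def edge (G : QBAG) (x y : ℕ) : Prop := (x, y) ∈ G.att ∨ (x, y) ∈ G.supp

/-- Well-formedness: edges live on the arguments, attack and support are disjoint,
and initial strengths lie in [0,1]. -/
def WF (G : QBAG) : Prop :=
  (∀ p ∈ G.att, p.1 ∈ G.args ∧ p.2 ∈ G.args) ∧
  (∀ p ∈ G.supp, p.1 ∈ G.args ∧ p.2 ∈ G.args) ∧
  Disjoint G.att G.supp ∧
  (∀ a ∈ G.args, G.tau a ∈ Set.Icc (0 : ℝ) 1)

/-- Acyclicity of the directed graph (A, Att ∪ Supp). -/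
def Acyclic (G : QBAG) : Prop := ∀ x, ¬ Relation.TransGen G.edge x x

/-- Direct attackers of an argument. -/
def attackers (G : QBAG) (a : ℕ) : Finset ℕ :=
  (G.att.filter (fun p => p.2 = a)).image Prod.fst

/-- Direct supporters of an argument. -/
def supporters (G : QBAG) (a : ℕ) : Finset ℕ :=
  (G.supp.filter (fun p => p.2 = a)).image Prod.fst

/-- Restriction G↓S of a QBAG to a subset S of the arguments. -/
def restrict (G : QBAG) (S : Finset ℕ) : QBAG where
  args := G.args ∩ S
  tau := G.tau
  att := G.att.filter (fun p => p.1 ∈ S ∧ p.2 ∈ S)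
  supp := G.supp.filter (fun p => p.1 ∈ S ∧ p.2 ∈ S)

/-- G⁻: the QBAG G with every attack and support edge pointing into x removed. -/
def dropInto (G : QBAG) (x : ℕ) : QBAG where
  args := G.args
  tau := G.tau
  att := G.att.filter (fun p => p.2 ≠ x)
  supp := G.supp.filter (fun p => p.2 ≠ x)

/-- G[x←ε]: the QBAG G with the initial strength of x replaced by ε. -/
def setTau (G : QBAG) (x : ℕ) (ε : ℝ) : QBAG where
  args := G.args
  tau := Function.update G.tau x ε
  att := G.att
  supp := G.supp

end QBAG

noncomputable section

/-- Sum aggregation. -/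
def sumAgg (G : QBAG) (s : ℕ → ℝ) (a : ℕ) : ℝ :=
  (∑ y ∈ G.supporters a, s y) - (∑ y ∈ G.attackers a, s y)

/-- Product aggregation. -/
def prodAgg (G : QBAG) (s : ℕ → ℝ) (a : ℕ) : ℝ :=
  (∏ y ∈ G.attackers a, (1 - s y)) - (∏ y ∈ G.supporters a, (1 - s y))

/-- Top aggregation. -/
def topAgg (G : QBAG) (s : ℕ → ℝ) (a : ℕ) : ℝ :=
  (G.supporters a).fold max 0 s - (G.attackers a).fold max 0 s

/-- h for the 2-Max(1) influence function. -/
def h2 (x : ℝ) : ℝ := max 0 x ^ 2 / (1 + max 0 x ^ 2)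

/-- h for the 1-Max(1) influence function. -/
def h1 (x : ℝ) : ℝ := max 0 x / (1 + max 0 x)

/-- 2-Max(1) influence function (used by QE). -/
def iotaQE (w s : ℝ) : ℝ := w - w * h2 (-s) + (1 - w) * h2 s

/-- Linear(1) influence function (used by DFQuAD). -/
def iotaLin (w s : ℝ) : ℝ := w - w * max 0 (-s) + (1 - w) * max 0 s

/-- 1-Max(1) influence function (used by SD-DFQuAD). -/
def iotaSD (w s : ℝ) : ℝ := w - w * h1 (-s) + (1 - w) * h1 s

/-- Euler-based influence function (used by EB and EBT). -/
def iotaEB (w s : ℝ) : ℝ := 1 - (1 - w ^ 2) / (1 + w * Real.exp s)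

/-- σ is a modular semantics with aggregation `agg` and influence `iota`:
on every well-formed acyclic QBAG the final strengths satisfy the defining equations. -/
def IsSemantics (agg : QBAG → (ℕ → ℝ) → ℕ → ℝ) (iota : ℝ → ℝ → ℝ)
    (σ : QBAG → ℕ → ℝ) : Prop :=
  ∀ G : QBAG, G.WF → G.Acyclic → ∀ a ∈ G.args, σ G a = iota (G.tau a) (agg G (σ G) a)

/-- QE semantics. -/
def IsQE (σ : QBAG → ℕ → ℝ) : Prop := IsSemantics sumAgg iotaQE σ

/-- DFQuAD semantics. -/
def IsDF (σ : QBAG → ℕ → ℝ) : Prop := IsSemantics prodAgg iotaLin σ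

/-- SD-DFQuAD semantics. -/
def IsSD (σ : QBAG → ℕ → ℝ) : Prop := IsSemantics prodAgg iotaSD σ

/-- EB semantics. -/
def IsEB (σ : QBAG → ℕ → ℝ) : Prop := IsSemantics sumAgg iotaEB σ

/-- EBT semantics. -/
def IsEBT (σ : QBAG → ℕ → ℝ) : Prop := IsSemantics topAgg iotaEB σ

/-- A gradual semantics assigns final strengths in [0,1] on acyclic QBAGs. -/
def IsGradualSemantics (σ : QBAG → ℕ → ℝ) : Prop :=
  ∀ G : QBAG, G.WF → G.Acyclic → ∀ a ∈ G.args, σ G a ∈ Set.Icc (0 : ℝ) 1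

/-- Removal-based contribution: ctrb^r_{G,a}(x) = σ_G(a) − σ_{G↓(A∖{x})}(a). -/
def ctrbR (σ : QBAG → ℕ → ℝ) (G : QBAG) (a x : ℕ) : ℝ :=
  σ G a - σ (G.restrict (G.args.erase x)) a

/-- Intrinsic-removal contribution: ctrb^{ri}_{G,a}(x) = σ_{G⁻}(a) − σ_{G↓(A∖{x})}(a). -/
def ctrbRI (σ : QBAG → ℕ → ℝ) (G : QBAG) (a x : ℕ) : ℝ :=
  σ (G.dropInto x) a - σ (G.restrict (G.args.erase x)) a

/-- Shapley-based contribution. -/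
def ctrbS (σ : QBAG → ℕ → ℝ) (G : QBAG) (a x : ℕ) : ℝ :=
  ∑ X ∈ ((G.args.erase a).erase x).powerset,
    ((X.card.factorial : ℝ) * ((G.args.erase a).card - X.card - 1).factorial /
      (G.args.erase a).card.factorial) *
    (σ (G.restrict (G.args \ X)) a - σ (G.restrict (G.args \ insert x X)) a)

/-- Gradient-based contribution: the derivative at ε = τ(x) (within [0,1]) of
the map ε ↦ σ_{G[x←ε]}(a). -/
def ctrbG (σ : QBAG → ℕ → ℝ) (G : QBAG) (a x : ℕ) : ℝ :=
  derivWithin (fun ε => σ (G.setTau x ε) a) (Set.Icc (0 : ℝ) 1) (G.tau x)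

/-- The contribution existence principle. -/
def ContributionExistence (ctrb : QBAG → ℕ → ℕ → ℝ) (σ : QBAG → ℕ → ℝ) : Prop :=
  ∀ G : QBAG, G.WF → G.Acyclic → ∀ a ∈ G.args,
    σ G a ≠ G.tau a → ∃ x ∈ G.args, x ≠ a ∧ ctrb G a x ≠ 0

/-- The quantitative contribution existence principle. -/
def QuantContributionExistence (ctrb : QBAG → ℕ → ℕ → ℝ) (σ : QBAG → ℕ → ℝ) : Prop :=
  ∀ G : QBAG, G.WF → G.Acyclic → ∀ a ∈ G.args,
    ∑ x ∈ G.args.erase a, ctrb G a x = σ G a - G.tau a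

/-- The strong faithfulness principle. -/
def StrongFaithfulness (ctrb : QBAG → ℕ → ℕ → ℝ) (σ : QBAG → ℕ → ℝ) : Prop :=
  ∀ G : QBAG, G.WF → G.Acyclic → ∀ a ∈ G.args, ∀ x ∈ G.args,
    ∀ ε ∈ Set.Icc (0 : ℝ) 1,
      (ctrb G a x < 0 →
        (ε < G.tau x → σ G a < σ (G.setTau x ε) a) ∧
        (ε > G.tau x → σ G a > σ (G.setTau x ε) a)) ∧
      (ctrb G a x = 0 → σ G a = σ (G.setTau x ε) a) ∧
      (ctrb G a x > 0 →
        (ε < G.tau x → σ G a > σ (G.setTau x ε) a) ∧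
        (ε > G.tau x → σ G a < σ (G.setTau x ε) a))

/-- The local faithfulness principle. -/
def LocalFaithfulness (ctrb : QBAG → ℕ → ℕ → ℝ) (σ : QBAG → ℕ → ℝ) : Prop :=
  ∀ G : QBAG, G.WF → G.Acyclic → ∀ a ∈ G.args, ∀ x ∈ G.args,
    ∃ δ > 0, ∀ ε ∈ Set.Icc (G.tau x - δ) (G.tau x + δ) ∩ Set.Icc (0 : ℝ) 1,
      (ctrb G a x < 0 →
        (ε < G.tau x → σ G a < σ (G.setTau x ε) a) ∧
        (ε > G.tau x → σ G a > σ (G.setTau x ε) a)) ∧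
      (ctrb G a x > 0 →
        (ε < G.tau x → σ G a > σ (G.setTau x ε) a) ∧
        (ε > G.tau x → σ G a < σ (G.setTau x ε) a))

/-- The quantitative local faithfulness principle: the map ε ↦ σ_{G[x←ε]}(a) is
differentiable (within [0,1]) at τ(x) with derivative ctrb_{G,a}(x); equivalently
σ_{G[x←τ(x)+ε]}(a) = σ_G(a) + ε·ctrb_{G,a}(x) + e(ε) with e(ε)/ε → 0. -/
def QuantLocalFaithfulness (ctrb : QBAG → ℕ → ℕ → ℝ) (σ : QBAG → ℕ → ℝ) : Prop :=
  ∀ G : QBAG, G.WF → G.Acyclic → ∀ a ∈ G.args, ∀ x ∈ G.args,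
    HasDerivWithinAt (fun ε => σ (G.setTau x ε) a) (ctrb G a x)
      (Set.Icc (0 : ℝ) 1) (G.tau x)

/-- The counterfactuality principle. -/
def Counterfactuality (ctrb : QBAG → ℕ → ℕ → ℝ) (σ : QBAG → ℕ → ℝ) : Prop :=
  ∀ G : QBAG, G.WF → G.Acyclic → ∀ a ∈ G.args, ∀ x ∈ G.args,
    (ctrb G a x < 0 → σ G a < σ (G.restrict (G.args.erase x)) a) ∧
    (ctrb G a x = 0 → σ G a = σ (G.restrict (G.args.erase x)) a) ∧
    (ctrb G a x > 0 → σ G a > σ (G.restrict (G.args.erase x)) a)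

/-- The quantitative counterfactuality principle. -/
def QuantCounterfactuality (ctrb : QBAG → ℕ → ℕ → ℝ) (σ : QBAG → ℕ → ℝ) : Prop :=
  ∀ G : QBAG, G.WF → G.Acyclic → ∀ a ∈ G.args, ∀ x ∈ G.args,
    ctrb G a x = σ G a - σ (G.restrict (G.args.erase x)) a

end


/-! ### Auxiliary lemmas for Statement 8 -/

section Aux

open Finset

lemma restrict_wf (G : QBAG) (h : G.WF) (S : Finset ℕ) : (G.restrict S).WF := by
  obtain ⟨h1, h2, h3, h4⟩ := h
  refine ⟨?_, ?_, ?_, ?_⟩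
  · intro p hp
    simp only [QBAG.restrict, Finset.mem_filter] at hp
    obtain ⟨hp, hp1, hp2⟩ := hp
    exact ⟨Finset.mem_inter.2 ⟨(h1 p hp).1, hp1⟩, Finset.mem_inter.2 ⟨(h1 p hp).2, hp2⟩⟩
  · intro p hp
    simp only [QBAG.restrict, Finset.mem_filter] at hp
    obtain ⟨hp, hp1, hp2⟩ := hp
    exact ⟨Finset.mem_inter.2 ⟨(h2 p hp).1, hp1⟩, Finset.mem_inter.2 ⟨(h2 p hp).2, hp2⟩⟩
  · exact Finset.disjoint_left.2 fun p hp hp' =>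
      (Finset.disjoint_left.1 h3) (Finset.mem_filter.1 hp).1 (Finset.mem_filter.1 hp').1
  · intro a ha
    exact h4 a (Finset.mem_inter.1 ha).1

lemma restrict_acyclic (G : QBAG) (h : G.Acyclic) (S : Finset ℕ) :
    (G.restrict S).Acyclic := by
  intro x hx
  refine h x (Relation.TransGen.mono ?_ x x hx)
  intro a b hab
  rcases hab with hab | hab
  · exact Or.inl (Finset.mem_filter.1 hab).1
  · exact Or.inr (Finset.mem_filter.1 hab).1

lemma restrict_args_self (G : QBAG) (h : G.WF) : G.restrict G.args = G := by
  obtain ⟨h1, h2, _, _⟩ := h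
  cases G with
  | mk args tau att supp =>
    simp only [QBAG.restrict, QBAG.mk.injEq, Finset.inter_self]
    refine ⟨trivial, trivial, ?_, ?_⟩
    · exact Finset.filter_true_of_mem fun p hp => ⟨(h1 p hp).1, (h1 p hp).2⟩
    · exact Finset.filter_true_of_mem fun p hp => ⟨(h2 p hp).1, (h2 p hp).2⟩

/-- On the restriction of an acyclic graph to the single argument `a`, every semantics
among the five assigns `a` its initial strength. -/
lemma sigma_restrict_singleton (σ : QBAG → ℕ → ℝ)
    (hσ : IsQE σ ∨ IsDF σ ∨ IsSD σ ∨ IsEB σ ∨ IsEBT σ)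
    (G : QBAG) (hWF : G.WF) (hAcyc : G.Acyclic) (a : ℕ) (ha : a ∈ G.args) :
    σ (G.restrict {a}) a = G.tau a := by
  set G' := G.restrict {a} with hG'
  have hWF' : G'.WF := restrict_wf G hWF {a}
  have hAcyc' : G'.Acyclic := restrict_acyclic G hAcyc {a}
  have ha' : a ∈ G'.args := Finset.mem_inter.2 ⟨ha, Finset.mem_singleton_self a⟩
  have hattE : G'.att = ∅ := by
    rw [Finset.eq_empty_iff_forall_notMem]
    intro p hp
    simp only [hG', QBAG.restrict, Finset.mem_filter, Finset.mem_singleton] at hp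
    obtain ⟨hp, hp1, hp2⟩ := hp
    have hpa : (a, a) ∈ G.att := by
      have : p = (a, a) := Prod.ext hp1 hp2
      rwa [this] at hp
    exact hAcyc a (Relation.TransGen.single (Or.inl hpa))
  have hsuppE : G'.supp = ∅ := by
    rw [Finset.eq_empty_iff_forall_notMem]
    intro p hp
    simp only [hG', QBAG.restrict, Finset.mem_filter, Finset.mem_singleton] at hp
    obtain ⟨hp, hp1, hp2⟩ := hp
    have hpa : (a, a) ∈ G.supp := by
      have : p = (a, a) := Prod.ext hp1 hp2
      rwa [this] at hp
    exact hAcyc a (Relation.TransGen.single (Or.inr hpa))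
  have hatt : G'.attackers a = ∅ := by simp [QBAG.attackers, hattE]
  have hsupp : G'.supporters a = ∅ := by simp [QBAG.supporters, hsuppE]
  have htau : G'.tau a = G.tau a := rfl
  have hτ := hWF.2.2.2 a ha
  obtain ⟨hτ0, hτ1⟩ := hτ
  have hsumAgg : sumAgg G' (σ G') a = 0 := by simp [sumAgg, hatt, hsupp]
  have hprodAgg : prodAgg G' (σ G') a = 0 := by simp [prodAgg, hatt, hsupp]
  have htopAgg : topAgg G' (σ G') a = 0 := by simp [topAgg, hatt, hsupp]
  have hEB : iotaEB (G.tau a) 0 = G.tau a := by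
    have h1 : (1 : ℝ) + G.tau a > 0 := by linarith
    rw [iotaEB, Real.exp_zero]
    field_simp
    ring
  rcases hσ with h | h | h | h | h
  · rw [h G' hWF' hAcyc' a ha', hsumAgg, htau, iotaQE]
    norm_num [h2]
  · rw [h G' hWF' hAcyc' a ha', hprodAgg, htau, iotaLin]
    norm_num
  · rw [h G' hWF' hAcyc' a ha', hprodAgg, htau, iotaSD]
    norm_num [h1]
  · rw [h G' hWF' hAcyc' a ha', hsumAgg, htau]
    exact hEB
  · rw [h G' hWF' hAcyc' a ha', htopAgg, htau]
    exact hEB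

/-- The Shapley weight. -/
noncomputable def shW (n k : ℕ) : ℝ :=
  (k.factorial : ℝ) * ((n - k - 1).factorial : ℝ) / (n.factorial : ℝ)

lemma shW_coeff_zero (n : ℕ) (hn : 0 < n) : (n : ℝ) * shW n 0 = 1 := by
  have hfac : (n.factorial : ℝ) ≠ 0 := Nat.cast_ne_zero.2 n.factorial_ne_zero
  have key : n * (n - 1).factorial = n.factorial := Nat.mul_factorial_pred hn.ne'
  rw [shW]
  field_simp
  simp only [Nat.factorial_zero, Nat.cast_one, Nat.sub_zero, mul_one]
  exact_mod_cast key

lemma shW_coeff_top (n : ℕ) (hn : 0 < n) : (n : ℝ) * shW n (n - 1) = 1 := by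
  have hfac : (n.factorial : ℝ) ≠ 0 := Nat.cast_ne_zero.2 n.factorial_ne_zero
  have key : n * (n - 1).factorial = n.factorial := Nat.mul_factorial_pred hn.ne'
  have h0 : n - (n - 1) - 1 = 0 := by omega
  rw [shW, h0]
  field_simp
  simp only [Nat.factorial_zero, Nat.cast_one, mul_one]
  exact_mod_cast key

lemma shW_coeff_mid (n k : ℕ) (hk0 : 0 < k) (hkn : k < n) :
    ((n - k : ℕ) : ℝ) * shW n k = (k : ℝ) * shW n (k - 1) := by
  have h1 : (n - k) * (n - k - 1).factorial = (n - k).factorial :=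
    Nat.mul_factorial_pred (by omega)
  have h2 : k * (k - 1).factorial = k.factorial := Nat.mul_factorial_pred hk0.ne'
  have h3 : n - (k - 1) - 1 = n - k := by omega
  have key : (n - k) * (k.factorial * (n - k - 1).factorial)
      = k * ((k - 1).factorial * (n - k).factorial) :=
    calc (n - k) * (k.factorial * (n - k - 1).factorial)
        = k.factorial * ((n - k) * (n - k - 1).factorial) := by ring
      _ = k.factorial * (n - k).factorial := by rw [h1]
      _ = (k * (k - 1).factorial) * (n - k).factorial := by rw [h2]
      _ = k * ((k - 1).factorial * (n - k).factorial) := by ring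
  rw [shW, shW, h3, mul_div_assoc', mul_div_assoc']
  congr 1
  exact_mod_cast key

/-- Shapley efficiency (removal form). -/
lemma shapley_eff (N : Finset ℕ) (v : Finset ℕ → ℝ) :
    ∑ x ∈ N, ∑ X ∈ (N.erase x).powerset,
      ((X.card.factorial : ℝ) * ((N.card - X.card - 1).factorial) / N.card.factorial) *
        (v X - v (insert x X))
    = v ∅ - v N := by
  rcases N.eq_empty_or_nonempty with rfl | hN
  · simp
  have hn : 0 < N.card := hN.card_pos
  have hstep : ∀ x ∈ N, ∀ X ∈ (N.erase x).powerset,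
      ((X.card.factorial : ℝ) * ((N.card - X.card - 1).factorial) / N.card.factorial) *
        (v X - v (insert x X))
      = shW N.card X.card * v X - shW N.card X.card * v (insert x X) := by
    intro x hx X hX
    rw [shW, mul_sub]
  rw [Finset.sum_congr rfl fun x hx => Finset.sum_congr rfl (hstep x hx)]
  simp_rw [Finset.sum_sub_distrib]
  -- positive part
  have hmem : ∀ (x : ℕ) (Y : Finset ℕ), x ∈ N ∧ Y ∈ (N.erase x).powerset ↔
      x ∈ N \ Y ∧ Y ∈ N.powerset := by
    intro x Y
    simp only [Finset.mem_powerset, Finset.mem_sdiff, Finset.subset_erase]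
    constructor
    · rintro ⟨hx, hYN, hxY⟩; exact ⟨⟨hx, hxY⟩, hYN⟩
    · rintro ⟨⟨hx, hxY⟩, hYN⟩; exact ⟨hx, hYN, hxY⟩
  have hP : ∑ x ∈ N, ∑ X ∈ (N.erase x).powerset, shW N.card X.card * v X
      = ∑ Y ∈ N.powerset, ((N \ Y).card : ℝ) * (shW N.card Y.card * v Y) := by
    rw [Finset.sum_comm' hmem]
    refine Finset.sum_congr rfl fun Y _ => ?_
    rw [Finset.sum_const, nsmul_eq_mul]
  -- negative part
  have hQinner : ∀ x ∈ N,
      ∑ X ∈ (N.erase x).powerset, shW N.card X.card * v (insert x X)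
      = ∑ Y ∈ N.powerset.filter (fun Y => x ∈ Y), shW N.card (Y.card - 1) * v Y := by
    intro x hx
    refine Finset.sum_nbij' (fun X => insert x X) (fun Y => Y.erase x) ?_ ?_ ?_ ?_ ?_
    · intro X hX
      rw [Finset.mem_powerset, Finset.subset_erase] at hX
      rw [Finset.mem_filter, Finset.mem_powerset]
      exact ⟨Finset.insert_subset hx hX.1, Finset.mem_insert_self x X⟩
    · intro Y hY
      rw [Finset.mem_filter, Finset.mem_powerset] at hY
      rw [Finset.mem_powerset]
      exact Finset.erase_subset_erase x hY.1
    · intro X hX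
      rw [Finset.mem_powerset, Finset.subset_erase] at hX
      exact Finset.erase_insert hX.2
    · intro Y hY
      rw [Finset.mem_filter] at hY
      exact Finset.insert_erase hY.2
    · intro X hX
      rw [Finset.mem_powerset, Finset.subset_erase] at hX
      rw [Finset.card_insert_of_notMem hX.2, Nat.add_sub_cancel]
  have hmem2 : ∀ (x : ℕ) (Y : Finset ℕ),
      x ∈ N ∧ Y ∈ N.powerset.filter (fun Y => x ∈ Y) ↔
      x ∈ Y ∧ Y ∈ N.powerset := by
    intro x Y
    simp only [Finset.mem_filter, Finset.mem_powerset]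
    constructor
    · rintro ⟨hx, hYN, hxY⟩; exact ⟨hxY, hYN⟩
    · rintro ⟨hxY, hYN⟩; exact ⟨hYN hxY, hYN, hxY⟩
  have hQ : ∑ x ∈ N, ∑ X ∈ (N.erase x).powerset, shW N.card X.card * v (insert x X)
      = ∑ Y ∈ N.powerset, (Y.card : ℝ) * (shW N.card (Y.card - 1) * v Y) := by
    rw [Finset.sum_congr rfl hQinner, Finset.sum_comm' hmem2]
    refine Finset.sum_congr rfl fun Y _ => ?_
    rw [Finset.sum_const, nsmul_eq_mul]
  rw [hP, hQ, ← Finset.sum_sub_distrib]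
  have hcoeff : ∀ Y ∈ N.powerset,
      ((N \ Y).card : ℝ) * (shW N.card Y.card * v Y)
        - (Y.card : ℝ) * (shW N.card (Y.card - 1) * v Y)
      = (if Y = (∅ : Finset ℕ) then v ∅ else 0) + (if Y = N then -v N else 0) := by
    intro Y hY
    rw [Finset.mem_powerset] at hY
    rcases eq_or_ne Y ∅ with rfl | hYne
    · have hNne : (∅ : Finset ℕ) ≠ N := fun h => by
        rw [← h] at hn; simp at hn
      rw [if_pos rfl, if_neg hNne]
      simp only [Finset.card_empty, Finset.sdiff_empty, Nat.cast_zero, zero_mul, sub_zero]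
      rw [← mul_assoc, shW_coeff_zero N.card hn, one_mul, add_zero]
    · rcases eq_or_ne Y N with rfl | hYN
      · rw [if_neg hYne, if_pos rfl, Finset.sdiff_self]
        simp only [Finset.card_empty, Nat.cast_zero, zero_mul, zero_sub, zero_add]
        rw [← mul_assoc, shW_coeff_top _ hn, one_mul]
      · rw [if_neg hYne, if_neg hYN, add_zero]
        have hk0 : 0 < Y.card := Finset.card_pos.2 (Finset.nonempty_of_ne_empty hYne)
        have hkn : Y.card < N.card := Finset.card_lt_card (Finset.ssubset_iff_subset_ne.2 ⟨hY, hYN⟩)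
        rw [Finset.card_sdiff_of_subset hY, ← mul_assoc, ← mul_assoc,
          shW_coeff_mid N.card Y.card hk0 hkn, sub_self]
  rw [Finset.sum_congr rfl hcoeff, Finset.sum_add_distrib,
    Finset.sum_ite_eq' N.powerset (∅ : Finset ℕ) (fun _ => v ∅),
    Finset.sum_ite_eq' N.powerset N (fun _ => -v N),
    if_pos (Finset.empty_mem_powerset N), if_pos (Finset.mem_powerset_self N)]
  ring

end Aux

/-- The Shapley-based contribution function satisfies contribution existence
w.r.t. each of the QE, DFQuAD, SD-DFQuAD, EB, and EBT semantics. -/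
theorem ctrbS_satisfies_contribution_existence
    (σ : QBAG → ℕ → ℝ) (hσ : IsQE σ ∨ IsDF σ ∨ IsSD σ ∨ IsEB σ ∨ IsEBT σ) :
    ContributionExistence (ctrbS σ) σ := by
  intro G hWF hAcyc a ha hne
  by_contra hcon
  push_neg at hcon
  have hzero : ∀ x ∈ G.args.erase a, ctrbS σ G a x = 0 := fun x hx =>
    hcon x (Finset.mem_of_mem_erase hx) (Finset.ne_of_mem_erase hx)
  have hsum : ∑ x ∈ G.args.erase a, ctrbS σ G a x = 0 := Finset.sum_eq_zero hzero
  have heff := shapley_eff (G.args.erase a) (fun X => σ (G.restrict (G.args \ X)) a)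
  have hunfold : ∑ x ∈ G.args.erase a, ctrbS σ G a x
      = ∑ x ∈ G.args.erase a, ∑ X ∈ ((G.args.erase a).erase x).powerset,
        ((X.card.factorial : ℝ) * (((G.args.erase a).card - X.card - 1).factorial) /
          (G.args.erase a).card.factorial) *
        ((fun X => σ (G.restrict (G.args \ X)) a) X -
          (fun X => σ (G.restrict (G.args \ X)) a) (insert x X)) := rfl
  rw [hunfold, heff] at hsum
  have hfull : G.restrict (G.args \ (∅ : Finset ℕ)) = G := by
    rw [Finset.sdiff_empty]
    exact restrict_args_self G hWF
  have hsingle : G.args \ G.args.erase a = {a} := Finset.sdiff_erase_self ha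
  simp only [hfull, hsingle] at hsum
  rw [sigma_restrict_singleton σ hσ G hWF hAcyc a ha] at hsum
  exact hne (by linarith)
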